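/- Let α ∈ (0,1) be irrational and let u be a Sturmian sequence with slope α. For every n ≥ 1, the number of factors of u of length n with Parikh vector (⌈(1−α)n⌉, ⌊nα⌋) equals n + 1 − P_α(n), where P_α(n) = #{k ∈ {1,…,n} : {kα} ≤ {nα}}. -/

import Mathlib

open scoped Classical

/-- The factor of length `n` of the sequence `s` starting at position `i`. -/
def fac {A : Type*} (s : ℕ → A) (i n : ℕ) : List A :=
  (List.range n).map (fun j => s (i + j))

/-- Sturmian sequence with slope `α` and intercept `ρ`:
`true` codes letter b (interval `[1-α,1)`), `false` codes letter a. -/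
noncomputable def sturmian (α ρ : ℝ) (n : ℕ) : Bool :=
  if 1 - α ≤ Int.fract (ρ + n * α) then true else false

noncomputable def W (α : ℝ) (n : ℕ) (y : ℝ) : List Bool :=
  (List.range n).map (fun j : ℕ => if 1 - α ≤ Int.fract (y + (j : ℝ) * α) then true else false)

lemma W_length (α : ℝ) (n : ℕ) (y : ℝ) : (W α n y).length = n := by
  rw [W, List.length_map, List.length_range]

lemma floor_step {α : ℝ} (hα : α ∈ Set.Ioo (0:ℝ) 1) (t : ℝ) :
    ⌊t + α⌋ = ⌊t⌋ + (if 1 - α ≤ Int.fract t then 1 else 0) := by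
  have h1 : t + α = (Int.fract t + α) + (⌊t⌋ : ℤ) := by
    rw [Int.fract]; push_cast; ring
  rw [h1, Int.floor_add_intCast]
  have h0 := Int.fract_nonneg t
  have hl := Int.fract_lt_one t
  split_ifs with h
  · have e : ⌊Int.fract t + α⌋ = 1 := by
      rw [Int.floor_eq_iff]
      constructor <;> push_cast <;> [linarith [hα.2]; linarith [hα.2]]
    omega
  · have e : ⌊Int.fract t + α⌋ = 0 := by
      rw [Int.floor_eq_zero_iff]
      constructor
      · linarith [hα.1]
      · push_cast; linarith [not_le.mp h, hα.2]
    omega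

lemma count_true (α : ℝ) (hα : α ∈ Set.Ioo (0:ℝ) 1) (y : ℝ) (m : ℕ) :
    ((W α m y).count true : ℤ) = ⌊y + m * α⌋ - ⌊y⌋ := by
  induction m with
  | zero => simp [W]
  | succ m ih =>
    have hsplit : W α (m+1) y = W α m y ++
        [if 1 - α ≤ Int.fract (y + m * α) then true else false] := by
      simp [W, List.range_succ]
    rw [hsplit, List.count_append]
    have hc : (y : ℝ) + (↑(m+1)) * α = (y + m * α) + α := by push_cast; ring
    rw [hc, floor_step hα (y + m * α)]
    push_cast
    split_ifs with h <;> simp <;> omega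

lemma floor_cut {α : ℝ} {y : ℝ} (hy : y ∈ Set.Ico (0:ℝ) 1) (k : ℕ) :
    ⌊y + (k : ℝ) * α⌋ = -⌊-(k : ℝ) * α⌋ - 1 +
      (if Int.fract (-(k : ℝ) * α) ≤ y then 1 else 0) := by
  set c := Int.fract (-(k : ℝ) * α) with hc
  set z := ⌊-(k : ℝ) * α⌋ with hz
  have h0 : 0 ≤ c := Int.fract_nonneg _
  have h1 : c < 1 := Int.fract_lt_one _
  have hk : y + (k : ℝ) * α = (y - c) - (z : ℤ) := by
    rw [hc, Int.fract, hz]; push_cast; ring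
  rw [hk, Int.floor_sub_intCast]
  split_ifs with h
  · have e : ⌊y - c⌋ = 0 := by
      rw [Int.floor_eq_zero_iff]
      exact ⟨by linarith, by linarith [hy.2]⟩
    omega
  · have e : ⌊y - c⌋ = -1 := by
      rw [Int.floor_eq_iff]
      constructor <;> push_cast <;> [linarith [hy.1]; linarith [not_le.mp h]]
    omega

lemma word_eq {α : ℝ} (hα : α ∈ Set.Ioo (0:ℝ) 1) {n : ℕ} {y z : ℝ}
    (hy : y ∈ Set.Ico (0:ℝ) 1) (hz : z ∈ Set.Ico (0:ℝ) 1)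
    (h : ∀ k ≤ n, (Int.fract (-(k : ℝ) * α) ≤ y ↔ Int.fract (-(k : ℝ) * α) ≤ z)) :
    W α n y = W α n z := by
  unfold W
  apply List.map_congr_left
  intro j hj
  rw [List.mem_range] at hj
  have hfy := floor_cut (α := α) hy j
  have hfz := floor_cut (α := α) hz j
  have hfy1 := floor_cut (α := α) hy (j+1)
  have hfz1 := floor_cut (α := α) hz (j+1)
  have e1 : ⌊y + (j:ℝ)*α⌋ = ⌊z + (j:ℝ)*α⌋ := by
    rw [hfy, hfz]
    have := h j (le_of_lt hj)
    split_ifs with p q q <;> first | rfl | (exfalso; tauto)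
  have e2 : ⌊y + ((j+1:ℕ):ℝ)*α⌋ = ⌊z + ((j+1:ℕ):ℝ)*α⌋ := by
    rw [hfy1, hfz1]
    have := h (j+1) hj
    split_ifs with p q q <;> first | rfl | (exfalso; tauto)
  have sy := floor_step hα (y + (j:ℝ)*α)
  have sz := floor_step hα (z + (j:ℝ)*α)
  have cy : y + ((j+1:ℕ):ℝ)*α = (y + (j:ℝ)*α) + α := by push_cast; ring
  have cz : z + ((j+1:ℕ):ℝ)*α = (z + (j:ℝ)*α) + α := by push_cast; ring
  rw [cy] at e2; rw [cz] at e2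
  rw [sy, sz, e1] at e2
  split_ifs at e2 ⊢ with p q q <;> first | rfl | omega

lemma word_eq_iff {α : ℝ} (hα : α ∈ Set.Ioo (0:ℝ) 1) {n : ℕ} {y z : ℝ}
    (hy : y ∈ Set.Ico (0:ℝ) 1) (hz : z ∈ Set.Ico (0:ℝ) 1)
    (h : W α n y = W α n z) :
    ∀ k ≤ n, (Int.fract (-(k : ℝ) * α) ≤ y ↔ Int.fract (-(k : ℝ) * α) ≤ z) := by
  intro k hk
  have htake : ∀ w : ℝ, (W α n w).take k = W α k w := by
    intro w
    unfold W
    rw [← List.map_take, List.take_range, min_eq_left hk]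
  have hWk : W α k y = W α k z := by rw [← htake y, ← htake z, h]
  have hcy := count_true α hα y k
  have hcz := count_true α hα z k
  rw [hWk] at hcy
  have hy0 : ⌊y⌋ = 0 := Int.floor_eq_zero_iff.mpr hy
  have hz0 : ⌊z⌋ = 0 := Int.floor_eq_zero_iff.mpr hz
  have e : ⌊y + (k:ℝ)*α⌋ = ⌊z + (k:ℝ)*α⌋ := by omega
  rw [floor_cut hy k, floor_cut hz k] at e
  split_ifs at e with p q q <;> first | tauto | omega

lemma dens {α : ℝ} (hirr : Irrational α) {ρ : ℝ} (hρ : ρ ∈ Set.Ico (0:ℝ) 1)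
    {a b : ℝ} (ha : 0 ≤ a) (hab : a < b) (hb : b ≤ 1) :
    ∃ i : ℕ, Int.fract (ρ + (i : ℝ) * α) ∈ Set.Ioo a b := by
  -- the subgroup generated by α and 1 is dense
  set S : AddSubgroup ℝ := AddSubgroup.closure {α, 1} with hS
  have hdense : Dense (S : Set ℝ) := by
    rcases S.dense_or_cyclic with hd | ⟨g, hg⟩
    · exact hd
    · exfalso
      have hαS : α ∈ S := AddSubgroup.subset_closure (by simp)
      have h1S : (1:ℝ) ∈ S := AddSubgroup.subset_closure (by simp)
      rw [hg, AddSubgroup.mem_closure_singleton] at hαS h1S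
      obtain ⟨m, hm⟩ := hαS
      obtain ⟨k, hk⟩ := h1S
      have hk0 : k ≠ 0 := by rintro rfl; simp at hk
      have : α * k = m := by
        rw [zsmul_eq_mul] at hm hk
        rw [← hm, mul_assoc, mul_comm g (k:ℝ), hk, mul_one]
      exact Int.not_irrational m (this ▸ hirr.mul_intCast hk0)
  set ε : ℝ := min (b - a) 1 with hε
  have hε0 : 0 < ε := lt_min (by linarith) one_pos
  obtain ⟨g, hgS, hg0, hgε⟩ : ∃ g ∈ S, 0 < g ∧ g < ε := by
    obtain ⟨x, hxS, hx⟩ := hdense.exists_mem_open isOpen_Ioo (Set.nonempty_Ioo.mpr hε0)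
    exact ⟨x, hxS, hx.1, hx.2⟩
  have hg1 : g < 1 := lt_of_lt_of_le hgε (min_le_right _ _)
  have hgba : g < b - a := lt_of_lt_of_le hgε (min_le_left _ _)
  rw [hS, AddSubgroup.mem_closure_pair] at hgS
  obtain ⟨m, k, hmk⟩ := hgS
  rw [zsmul_eq_mul, zsmul_eq_mul, mul_one] at hmk
  have hm0 : m ≠ 0 := by
    rintro rfl
    rw [Int.cast_zero, zero_mul, zero_add] at hmk
    have h1 : (0:ℝ) < k := hmk ▸ hg0
    have h2 : (k:ℝ) < 1 := by linarith
    have h3 : 0 < k := by exact_mod_cast h1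
    have h4 : k < 1 := by exact_mod_cast h2
    omega
  rcases hm0.lt_or_gt with hmneg | hmpos
  · -- m < 0 : step downward with step g
    set d : ℕ := (-m).toNat with hdd
    have hdα : (d : ℝ) * α = k - g := by
      have : ((d : ℕ) : ℝ) = -(m : ℝ) := by
        have h := Int.toNat_of_nonneg (by omega : (0:ℤ) ≤ -m)
        rw [hdd]; exact_mod_cast h
      rw [this]; linarith [hmk]
    have H : ∃ j : ℕ, ρ - (j : ℝ) * g < b - 1 := by
      obtain ⟨j, hj⟩ := exists_nat_gt ((ρ - (b - 1)) / g)
      exact ⟨j, by rw [div_lt_iff₀ hg0] at hj; nlinarith⟩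
    set j := Nat.find H with hj
    have hjs : ρ - (j : ℝ) * g < b - 1 := Nat.find_spec H
    have hjne : j ≠ 0 := by
      intro h0
      rw [h0] at hjs; push_cast at hjs
      have := hρ.1; linarith
    obtain ⟨j', hj'⟩ : ∃ j', j = j' + 1 := Nat.exists_eq_succ_of_ne_zero hjne
    have hjmin : ¬ (ρ - (j' : ℝ) * g < b - 1) := by
      have := Nat.find_min H (m := j') (by omega)
      exact this
    push_neg at hjmin
    have hlow : a - 1 < ρ - (j : ℝ) * g := by
      rw [hj']; push_cast; nlinarith
    refine ⟨j * d, ?_⟩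
    have hcalc : ρ + ((j * d : ℕ) : ℝ) * α = (ρ - (j : ℝ) * g) + ((j : ℤ) * k : ℤ) := by
      push_cast
      rw [mul_assoc, hdα]; ring
    rw [hcalc, Int.fract_add_intCast]
    have hfl : ⌊ρ - (j : ℝ) * g⌋ = -1 := by
      rw [Int.floor_eq_iff]
      push_cast
      constructor <;> [linarith; linarith]
    rw [Int.fract, hfl]
    push_cast
    constructor <;> [linarith; linarith]
  · -- m > 0 : step upward with step g
    set d : ℕ := m.toNat with hdd
    have hdα : (d : ℝ) * α = g - k := by
      have : ((d : ℕ) : ℝ) = (m : ℝ) := by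
        have h := Int.toNat_of_nonneg (by omega : (0:ℤ) ≤ m)
        rw [hdd]; exact_mod_cast h
      rw [this]; linarith [hmk]
    have H : ∃ j : ℕ, 1 + a < ρ + (j : ℝ) * g := by
      obtain ⟨j, hj⟩ := exists_nat_gt ((1 + a - ρ) / g)
      exact ⟨j, by rw [div_lt_iff₀ hg0] at hj; nlinarith⟩
    set j := Nat.find H with hj
    have hjs : 1 + a < ρ + (j : ℝ) * g := Nat.find_spec H
    have hjne : j ≠ 0 := by
      intro h0
      rw [h0] at hjs; push_cast at hjs
      have := hρ.2; linarith
    obtain ⟨j', hj'⟩ : ∃ j', j = j' + 1 := Nat.exists_eq_succ_of_ne_zero hjne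
    have hjmin : ¬ (1 + a < ρ + (j' : ℝ) * g) := Nat.find_min H (m := j') (by omega)
    push_neg at hjmin
    have hhigh : ρ + (j : ℝ) * g < 1 + b := by
      rw [hj']; push_cast; nlinarith
    refine ⟨j * d, ?_⟩
    have hcalc : ρ + ((j * d : ℕ) : ℝ) * α = (ρ + (j : ℝ) * g) - ((j : ℤ) * k : ℤ) := by
      push_cast
      rw [mul_assoc, hdα]; ring
    rw [hcalc, Int.fract_sub_intCast]
    have hfl : ⌊ρ + (j : ℝ) * g⌋ = 1 := by
      rw [Int.floor_eq_iff]
      push_cast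
      constructor <;> [linarith; linarith]
    rw [Int.fract, hfl]
    push_cast
    constructor <;> [linarith; linarith]

lemma irr_fract_ne {x : ℝ} (hx : Irrational x) : Int.fract x ≠ 0 := by
  intro h
  have hx2 : x = (⌊x⌋ : ℝ) := by
    have : Int.fract x = x - ⌊x⌋ := rfl
    linarith [this ▸ h]
  exact hx.ne_int ⌊x⌋ hx2

lemma floor_neg_irr {x : ℝ} (hx : Irrational x) : ⌊-x⌋ = -⌊x⌋ - 1 := by
  have h1 : (⌊x⌋:ℝ) < x := lt_of_le_of_ne (Int.floor_le x) (Ne.symm (hx.ne_int ⌊x⌋))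
  have h2 : x < ⌊x⌋ + 1 := Int.lt_floor_add_one x
  rw [Int.floor_eq_iff]
  constructor <;> push_cast <;> linarith

lemma cut_inj {α : ℝ} (hirr : Irrational α) {k j : ℕ}
    (h : Int.fract (-(k:ℝ)*α) = Int.fract (-(j:ℝ)*α)) : k = j := by
  by_contra hne
  obtain ⟨z, hz⟩ := Int.fract_eq_fract.mp h
  have hz' : (((j:ℤ) - (k:ℤ)):ℝ) * α = (z:ℝ) := by push_cast; push_cast at hz; linarith
  have hne' : (j:ℤ) - (k:ℤ) ≠ 0 := by omega
  have h2 := hirr.intCast_mul hne'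
  have h3 : (((j:ℤ) - (k:ℤ) : ℤ) : ℝ) * α = (z:ℝ) := by push_cast; push_cast at hz'; linarith
  rw [h3] at h2
  exact Int.not_irrational z h2

lemma cfct (l : List Bool) : l.count false + l.count true = l.length := by
  induction l with
  | nil => simp
  | cons h t ih => cases h <;> simp [List.count_cons] <;> omega

theorem stmt_4 (α ρ : ℝ) (hα : α ∈ Set.Ioo (0:ℝ) 1) (hirr : Irrational α)
    (hρ : ρ ∈ Set.Ico (0:ℝ) 1) (n : ℕ) (hn : 1 ≤ n) :
    {w : List Bool | (∃ i, w = fac (sturmian α ρ) i n) ∧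
        ((w.count false : ℤ) = ⌈(1 - α) * n⌉ ∧ (w.count true : ℤ) = ⌊(n : ℝ) * α⌋)}.ncard =
      n + 1 - ((Finset.Icc 1 n).filter
        (fun k => Int.fract ((k : ℝ) * α) ≤ Int.fract ((n : ℝ) * α))).card := by
  set c : ℕ → ℝ := fun k => Int.fract (-(k:ℝ) * α) with hcdef
  set y : ℕ → ℝ := fun i => Int.fract (ρ + (i:ℝ) * α) with hydef
  have hcm : ∀ k, c k ∈ Set.Ico (0:ℝ) 1 := fun k => ⟨Int.fract_nonneg _, Int.fract_lt_one _⟩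
  have hym : ∀ i, y i ∈ Set.Ico (0:ℝ) 1 := fun i => ⟨Int.fract_nonneg _, Int.fract_lt_one _⟩
  have hirrn : Irrational ((n:ℝ) * α) := hirr.natCast_mul (by omega)
  have hc0 : c 0 = 0 := by simp [hcdef]
  have hcnpos : 0 < c n := by
    rcases lt_or_eq_of_le (Int.fract_nonneg (-(n:ℝ) * α)) with h | h
    · exact h
    · exfalso
      have : Int.fract (-((n:ℝ) * α)) = 0 := by rw [← neg_mul]; exact h.symm
      exact irr_fract_ne hirrn (Int.fract_neg_eq_zero.mp this)
  -- factors are words W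
  have hfacW : ∀ i, fac (sturmian α ρ) i n = W α n (y i) := by
    intro i
    unfold fac W sturmian
    apply List.map_congr_left
    intro j hj
    have harg : y i + (j:ℝ) * α = (ρ + ((i + j : ℕ):ℝ) * α) - (⌊ρ + (i:ℝ) * α⌋ : ℤ) := by
      simp only [hydef, Int.fract]
      push_cast
      ring
    rw [harg, Int.fract_sub_intCast]
  have hfln : -⌊-(n:ℝ) * α⌋ - 1 = ⌊(n:ℝ) * α⌋ := by
    have := floor_neg_irr hirrn
    rw [neg_mul]
    omega
  -- count of true letters
  have hcount : ∀ z ∈ Set.Ico (0:ℝ) 1,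
      ((W α n z).count true : ℤ) = ⌊(n:ℝ) * α⌋ + (if c n ≤ z then 1 else 0) := by
    intro z hz
    rw [count_true α hα z n, Int.floor_eq_zero_iff.mpr hz, floor_cut hz n]
    simp only [hcdef]
    split_ifs <;> omega
  have hceil : (n:ℤ) - ⌊(n:ℝ) * α⌋ = ⌈(1 - α) * (n:ℝ)⌉ := by
    have h1 : (1 - α) * (n:ℝ) = -((n:ℝ) * α) + ((n:ℤ):ℝ) := by push_cast; ring
    rw [h1, Int.ceil_add_intCast, Int.ceil_neg]
    have h2 : ⌈(n:ℝ) * α⌉ = ⌊(n:ℝ) * α⌋ + 1 := by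
      have h3 := floor_neg_irr hirrn
      have h4 : ⌊-((n:ℝ)*α)⌋ = -⌈(n:ℝ)*α⌉ := Int.floor_neg
      omega
    omega
  -- characterization of the Parikh condition
  have hchar : ∀ z ∈ Set.Ico (0:ℝ) 1,
      ((((W α n z).count false : ℤ) = ⌈(1 - α) * (n:ℝ)⌉ ∧
        ((W α n z).count true : ℤ) = ⌊(n:ℝ) * α⌋) ↔ ¬ (c n ≤ z)) := by
    intro z hz
    have hlen := cfct (W α n z)
    rw [W_length] at hlen
    have hct := hcount z hz
    constructor
    · intro ⟨_, h2⟩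
      rw [h2] at hct
      split_ifs at hct with h
      · omega
      · exact h
    · intro h
      rw [if_neg h] at hct
      refine ⟨?_, by omega⟩
      have : ((W α n z).count false : ℤ) = (n:ℤ) - ((W α n z).count true : ℤ) := by
        push_cast
        omega
      rw [this, hct]
      omega
  classical
  set K : Finset ℕ := (Finset.range (n+1)).filter (fun k => c k < c n) with hK
  have hseteq : {w : List Bool | (∃ i, w = fac (sturmian α ρ) i n) ∧
      ((w.count false : ℤ) = ⌈(1 - α) * n⌉ ∧ (w.count true : ℤ) = ⌊(n : ℝ) * α⌋)} =
      ↑(K.image (fun k => W α n (c k))) := by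
    ext w
    simp only [Set.mem_setOf_eq, Finset.coe_image, Set.mem_image, Finset.mem_coe,
      hK, Finset.mem_filter, Finset.mem_range]
    constructor
    · rintro ⟨⟨i, hwi⟩, hcf, hct⟩
      have hwW : w = W α n (y i) := by rw [hwi, hfacW i]
      have hni : ¬ (c n ≤ y i) :=
        (hchar (y i) (hym i)).mp (by rw [← hwW]; exact ⟨hcf, hct⟩)
      set T : Finset ℕ := (Finset.range (n+1)).filter (fun k => c k ≤ y i) with hT
      have hTne : T.Nonempty := ⟨0, by
        simp only [hT, Finset.mem_filter, Finset.mem_range]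
        exact ⟨by omega, by rw [hc0]; exact (hym i).1⟩⟩
      obtain ⟨k₀, hk₀, hmax⟩ := T.exists_max_image c hTne
      simp only [hT, Finset.mem_filter, Finset.mem_range] at hk₀
      have hequiv : ∀ j ≤ n, (c j ≤ c k₀ ↔ c j ≤ y i) := by
        intro j hj
        constructor
        · intro h; exact le_trans h hk₀.2
        · intro h
          exact hmax j (by simp only [hT, Finset.mem_filter, Finset.mem_range]; exact ⟨by omega, h⟩)
      have hwk : W α n (y i) = W α n (c k₀) :=
        word_eq hα (hym i) (hcm k₀) (fun j hj => (hequiv j hj).symm)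
      refine ⟨k₀, ⟨hk₀.1, lt_of_le_of_lt hk₀.2 (not_le.mp hni)⟩, ?_⟩
      rw [← hwk, ← hwW]
    · rintro ⟨k, ⟨hk1, hk2⟩, hwk⟩
      set U : Finset ℕ := (Finset.range (n+1)).filter (fun j => c k < c j) with hU
      have hUne : U.Nonempty := ⟨n, by
        simp only [hU, Finset.mem_filter, Finset.mem_range]
        exact ⟨by omega, hk2⟩⟩
      obtain ⟨m₀, hm₀, hmin⟩ := U.exists_min_image c hUne
      simp only [hU, Finset.mem_filter, Finset.mem_range] at hm₀
      obtain ⟨i, hi⟩ := dens hirr hρ (hcm k).1 hm₀.2 (le_of_lt (hcm m₀).2)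
      have hyi : y i ∈ Set.Ioo (c k) (c m₀) := hi
      have hequiv : ∀ j ≤ n, (c j ≤ y i ↔ c j ≤ c k) := by
        intro j hj
        constructor
        · intro h
          by_contra hjk
          have hjU : j ∈ U := by
            simp only [hU, Finset.mem_filter, Finset.mem_range]
            exact ⟨by omega, not_le.mp hjk⟩
          have := hmin j hjU
          linarith [hyi.2]
        · intro h; exact le_trans h (le_of_lt hyi.1)
      have hwW : W α n (y i) = W α n (c k) := word_eq hα (hym i) (hcm k) hequiv
      have hwy : w = W α n (y i) := by rw [← hwk, hwW]
      have hni : ¬ (c n ≤ y i) := by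
        intro h
        have := (hequiv n le_rfl).mp h
        linarith
      have hcounts := (hchar (y i) (hym i)).mpr hni
      refine ⟨⟨i, by rw [hwy, hfacW i]⟩, ?_, ?_⟩
      · rw [hwy]; exact hcounts.1
      · rw [hwy]; exact hcounts.2
  rw [hseteq, Set.ncard_coe_finset]
  have hinj : Set.InjOn (fun k => W α n (c k)) ↑K := by
    intro k hk j hj h
    simp only [hK, Finset.coe_filter, Set.mem_setOf_eq, Finset.mem_range] at hk hj
    have hiff := word_eq_iff hα (hcm k) (hcm j) h
    have h1 : c k ≤ c j := (hiff k (by omega)).mp le_rfl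
    have h2 : c j ≤ c k := (hiff j (by omega)).mpr le_rfl
    exact cut_inj hirr (le_antisymm h1 h2)
  rw [Finset.card_image_of_injOn hinj]
  -- now count K
  set P : Finset ℕ := (Finset.Icc 1 n).filter
    (fun k => Int.fract ((k : ℝ) * α) ≤ Int.fract ((n : ℝ) * α)) with hP
  set Q : Finset ℕ := (Finset.Icc 1 n).filter
    (fun k => ¬ (Int.fract ((k : ℝ) * α) ≤ Int.fract ((n : ℝ) * α))) with hQ
  have hPQ : P.card + Q.card = n := by
    rw [hP, hQ, Finset.card_filter_add_card_filter_not, Nat.card_Icc]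
    omega
  have hKQ : K = insert 0 Q := by
    ext k
    simp only [hK, Finset.mem_filter, Finset.mem_range, Finset.mem_insert, hQ,
      Finset.mem_Icc, not_le]
    constructor
    · rintro ⟨hk1, hk2⟩
      rcases Nat.eq_zero_or_pos k with rfl | hkpos
      · exact Or.inl rfl
      · refine Or.inr ⟨⟨hkpos, by omega⟩, ?_⟩
        have hfk : c k = 1 - Int.fract ((k:ℝ) * α) := by
          rw [hcdef]
          simp only
          rw [neg_mul, Int.fract_neg (irr_fract_ne (hirr.natCast_mul (by omega)))]
        have hfn : c n = 1 - Int.fract ((n:ℝ) * α) := by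
          rw [hcdef]
          simp only
          rw [neg_mul, Int.fract_neg (irr_fract_ne hirrn)]
        rw [hfk, hfn] at hk2
        linarith
    · rintro (rfl | ⟨⟨hk1, hk2⟩, hlt⟩)
      · exact ⟨by omega, by rw [hc0]; exact hcnpos⟩
      · refine ⟨by omega, ?_⟩
        have hfk : c k = 1 - Int.fract ((k:ℝ) * α) := by
          rw [hcdef]
          simp only
          rw [neg_mul, Int.fract_neg (irr_fract_ne (hirr.natCast_mul (by omega)))]
        have hfn : c n = 1 - Int.fract ((n:ℝ) * α) := by
          rw [hcdef]
          simp only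
          rw [neg_mul, Int.fract_neg (irr_fract_ne hirrn)]
        rw [hfk, hfn]
        linarith
  have h0Q : 0 ∉ Q := by
    simp [hQ]
  have hPbig : ((Finset.Icc 1 n).filter
      (fun k => Int.fract ((k : ℝ) * α) ≤ Int.fract ((n : ℝ) * α))).card = P.card := by
    have h1 : ((do let a ← Finset.Icc 1 n; pure ((a : ℝ))) : Finset ℝ)
        = (Finset.Icc 1 n).image (fun a : ℕ => (a : ℝ)) := by
      ext x
      simp [Finset.bind_def, Finset.pure_def, Finset.sup_eq_biUnion, eq_comm]
    rw [show ((Finset.Icc 1 n).filter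
        (fun k => Int.fract ((k : ℝ) * α) ≤ Int.fract ((n : ℝ) * α)))
      = Finset.filter (fun k : ℝ => Int.fract (k * α) ≤ Int.fract ((n : ℝ) * α))
        ((Finset.Icc 1 n).image (fun a : ℕ => (a : ℝ))) from by rw [← h1]]
    rw [Finset.filter_image]
    rw [Finset.card_image_of_injective _ Nat.cast_injective]
  rw [hKQ, Finset.card_insert_of_notMem h0Q, hPbig]
  omega
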